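/- For every n ≥ 3, the TDC-stability of the book graph B_n = K_{1,n} □ P₂ equals 1. -/

import Mathlib

open SimpleGraph

/-- A total dominator coloring with `k` colors: a proper coloring in which every
vertex is adjacent to all vertices of some nonempty color class. -/
def IsTDColoring {V : Type*} (G : SimpleGraph V) {k : ℕ} (c : V → Fin k) : Prop :=
  (∀ u v, G.Adj u v → c u ≠ c v) ∧
  ∀ v : V, ∃ i : Fin k, (∃ w, c w = i) ∧ ∀ w, c w = i → G.Adj v w

/-- The total dominator chromatic number. -/
noncomputable def tdChromatic {V : Type*} (G : SimpleGraph V) : ℕ :=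
  sInf {k | ∃ c : V → Fin k, IsTDColoring G c}

/-- TDC-stability: minimum number of vertices whose removal changes the TDC-number. -/
noncomputable def tdStability {V : Type*} [Fintype V] (G : SimpleGraph V) : ℕ :=
  sInf {k | ∃ S : Finset V, S.card = k ∧ 0 < k ∧
    tdChromatic (G.induce {v | v ∉ S}) ≠ tdChromatic G}

/-- TDC-bondage number: minimum number of edges whose removal changes the TDC-number. -/
noncomputable def tdBondage {V : Type*} [Fintype V] (G : SimpleGraph V) : ℕ :=
  sInf {k | ∃ F : Finset (Sym2 V), ↑F ⊆ G.edgeSet ∧ F.card = k ∧ 0 < k ∧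
    tdChromatic (G.deleteEdges ↑F) ≠ tdChromatic G}

/-- The neighbourhood corona `G₁ ⋆ G₂`. -/
def ncorona {V₁ V₂ : Type*} (G₁ : SimpleGraph V₁) (G₂ : SimpleGraph V₂) :
    SimpleGraph (V₁ ⊕ V₁ × V₂) :=
  SimpleGraph.fromRel (fun u v =>
    match u, v with
    | .inl u, .inl v => G₁.Adj u v
    | .inl u, .inr (i, _) => G₁.Adj u i
    | .inr (i, w), .inr (j, x) => i = j ∧ G₂.Adj w x
    | .inr _, .inl _ => False)

/-- The friendship graph `F n`: `n` triangles sharing the common vertex `none`. -/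
def friendshipGraph (n : ℕ) : SimpleGraph (Option (Fin n × Fin 2)) :=
  SimpleGraph.fromRel (fun u v => u = none ∨ u.map Prod.fst = v.map Prod.fst)

/-- The `r`-gluing of `G₁` and `G₂` along cliques `f₁ '' univ` and `f₂ '' univ`. -/
def rGlue {V₁ V₂ : Type*} (G₁ : SimpleGraph V₁) (G₂ : SimpleGraph V₂)
    {r : ℕ} (f₁ : Fin r → V₁) (f₂ : Fin r → V₂) :
    SimpleGraph (V₁ ⊕ {w : V₂ // w ∉ Set.range f₂}) :=
  SimpleGraph.fromRel (fun u v =>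
    match u, v with
    | .inl u, .inl v => G₁.Adj u v
    | .inl u, .inr w => ∃ i, f₁ i = u ∧ G₂.Adj (f₂ i) w.1
    | .inr w, .inr x => G₂.Adj w.1 x.1
    | .inr _, .inl _ => False)

abbrev BV (n : ℕ) := (Fin 1 ⊕ Fin n) × Fin 2
abbrev BG (n : ℕ) : SimpleGraph (BV n) :=
  (completeBipartiteGraph (Fin 1) (Fin n)).boxProd (SimpleGraph.pathGraph 2)

lemma bg_adj {n : ℕ} (u v : BV n) : (BG n).Adj u v ↔
    ((u.1.isLeft ∧ v.1.isRight ∨ u.1.isRight ∧ v.1.isLeft) ∧ u.2 = v.2) ∨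
    (u.1 = v.1 ∧ (u.2.val + 1 = v.2.val ∨ v.2.val + 1 = u.2.val)) := by
  obtain ⟨u1, u2⟩ := u; obtain ⟨v1, v2⟩ := v
  simp only [SimpleGraph.boxProd_adj, SimpleGraph.pathGraph_adj, completeBipartiteGraph]
  tauto

lemma adj_pendant {n : ℕ} {i : Fin n} {w : BV n} (h : (BG n).Adj (Sum.inr i, 1) w)
    (hw : w ≠ (Sum.inl 0, 1)) : w = (Sum.inr i, 0) := by
  obtain ⟨w1 | w1, w2⟩ := w <;> rw [bg_adj] at h
  · fin_cases w2 <;> simp_all [Subsingleton.elim w1 (0 : Fin 1)]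
  · fin_cases w2 <;> simp_all

lemma not_adj_aa {n : ℕ} (p q : Fin n) : ¬ (BG n).Adj (Sum.inr p, 0) (Sum.inr q, 0) := by
  rw [bg_adj]; simp

lemma not_adj_ab {n : ℕ} {p q : Fin n} (hpq : p ≠ q) :
    ¬ (BG n).Adj (Sum.inr p, 0) (Sum.inr q, 1) := by
  rw [bg_adj]; simp [hpq]

abbrev delSet (n : ℕ) : Set (BV n) :=
  {v | v ∉ ({(Sum.inl 0, 1)} : Finset (BV n))}

def av (n : ℕ) (i : Fin n) : ↥(delSet n) := ⟨(Sum.inr i, 0), by simp [delSet]⟩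
def bv (n : ℕ) (i : Fin n) : ↥(delSet n) := ⟨(Sum.inr i, 1), by simp [delSet]⟩
def cv (n : ℕ) : ↥(delSet n) := ⟨(Sum.inl 0, 0), by simp [delSet]⟩

lemma induced_lower (n : ℕ) (hn : 3 ≤ n) (k : ℕ) (hk : k ≤ 4)
    (c : ↥(delSet n) → Fin k)
    (h : IsTDColoring ((BG n).induce (delSet n)) c) : False := by
  obtain ⟨hp, hd⟩ := h
  -- every color class of `c (av i)` is the singleton {av i}
  have hsing : ∀ i : Fin n, ∀ w, c w = c (av n i) → w = av n i := by
    intro i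
    obtain ⟨m, ⟨w0, hw0⟩, hall⟩ := hd (bv n i)
    have key : ∀ w, c w = m → w = av n i := by
      intro w hw
      have hadj : (BG n).Adj (Sum.inr i, 1) w.1 := hall w hw
      have hne : w.1 ≠ (Sum.inl 0, 1) := by
        have := w.2; simp only [delSet, Set.mem_setOf_eq, Finset.mem_singleton] at this
        exact this
      exact Subtype.ext (adj_pendant hadj hne)
    have h0 : c (av n i) = m := by rw [← hw0, key w0 hw0]
    intro w hw
    exact key w (hw.trans h0)
  have vne : ∀ {p q : Fin k}, p ≠ q → p.val ≠ q.val := fun h h' => h (Fin.ext h')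
  set i0 : Fin n := ⟨0, by omega⟩ with hdefi0
  set i1 : Fin n := ⟨1, by omega⟩ with hdefi1
  set i2 : Fin n := ⟨2, by omega⟩ with hdefi2
  have h01 : i0 ≠ i1 := Fin.ne_of_val_ne (by norm_num)
  have h02 : i0 ≠ i2 := Fin.ne_of_val_ne (by norm_num)
  have h12 : i1 ≠ i2 := Fin.ne_of_val_ne (by norm_num)
  have av_inj : ∀ i j : Fin n, av n i = av n j → i = j := by
    intro i j hij
    simpa [av] using congrArg (fun x => x.1.1) hij
  have hav_ne : ∀ i j : Fin n, i ≠ j → c (av n i) ≠ c (av n j) := by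
    intro i j hij heq
    exact hij (av_inj i j (hsing j (av n i) heq))
  have hcv_ne : ∀ i : Fin n, c (cv n) ≠ c (av n i) := by
    intro i heq
    simpa [cv, av] using congrArg (fun x => x.1.1) (hsing i (cv n) heq)
  have hbv_ne : ∀ i j : Fin n, c (bv n j) ≠ c (av n i) := by
    intro i j heq
    simpa [bv, av, Prod.ext_iff] using congrArg (fun x => x.1) (hsing i (bv n j) heq)
  -- the color class totally dominated by `av i1`
  obtain ⟨m, ⟨w0, hw0⟩, hall⟩ := hd (av n i1)
  have hm_ne : ∀ i : Fin n, m ≠ c (av n i) := by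
    intro i heq
    exact not_adj_aa i1 i (hall (av n i) heq.symm)
  have hm_y : m = c (cv n) := by
    by_contra hmy
    have b0 := (c (av n i0)).isLt
    have b1 := (c (av n i1)).isLt
    have b2 := (c (av n i2)).isLt
    have by' := (c (cv n)).isLt
    have bm := m.isLt
    have e01 := vne (hav_ne i0 i1 h01)
    have e02 := vne (hav_ne i0 i2 h02)
    have e12 := vne (hav_ne i1 i2 h12)
    have ey0 := vne (hcv_ne i0); have ey1 := vne (hcv_ne i1); have ey2 := vne (hcv_ne i2)
    have em0 := vne (hm_ne i0); have em1 := vne (hm_ne i1); have em2 := vne (hm_ne i2)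
    have emy := vne hmy
    omega
  have hb0 : c (bv n i0) = c (cv n) := by
    by_contra hb
    have b0 := (c (av n i0)).isLt
    have b1 := (c (av n i1)).isLt
    have b2 := (c (av n i2)).isLt
    have by' := (c (cv n)).isLt
    have bb := (c (bv n i0)).isLt
    have e01 := vne (hav_ne i0 i1 h01)
    have e02 := vne (hav_ne i0 i2 h02)
    have e12 := vne (hav_ne i1 i2 h12)
    have ey0 := vne (hcv_ne i0); have ey1 := vne (hcv_ne i1); have ey2 := vne (hcv_ne i2)
    have eb0 := vne (hbv_ne i0 i0); have eb1 := vne (hbv_ne i1 i0); have eb2 := vne (hbv_ne i2 i0)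
    have eby := vne hb
    omega
  exact not_adj_ab h01.symm (hall (bv n i0) (hb0.trans hm_y.symm))

def col (n : ℕ) : BV n → Fin 4
  | (Sum.inl _, j) => if j = 0 then 0 else 1
  | (Sum.inr _, j) => if j = 0 then 2 else 3

lemma col_td (n : ℕ) : IsTDColoring (BG n) (col n) := by
  constructor
  · rintro ⟨u1 | u1, u2⟩ ⟨v1 | v1, v2⟩ h <;> fin_cases u2 <;> fin_cases v2 <;>
      simp_all [bg_adj, col]
  · rintro ⟨v1 | v1, v2⟩ <;> fin_cases v2
    · exact ⟨1, ⟨(Sum.inl 0, 1), by simp [col]⟩, by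
        rintro ⟨w1 | w1, w2⟩ hw <;> fin_cases w2 <;>
          simp_all [col, bg_adj, SimpleGraph.pathGraph_adj, Fin.fin_one_eq_zero]⟩
    · exact ⟨0, ⟨(Sum.inl 0, 0), by simp [col]⟩, by
        rintro ⟨w1 | w1, w2⟩ hw <;> fin_cases w2 <;>
          simp_all [col, bg_adj, SimpleGraph.pathGraph_adj, Fin.fin_one_eq_zero]⟩
    · exact ⟨0, ⟨(Sum.inl 0, 0), by simp [col]⟩, by
        rintro ⟨w1 | w1, w2⟩ hw <;> fin_cases w2 <;> simp_all [col, bg_adj]⟩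
    · exact ⟨1, ⟨(Sum.inl 0, 1), by simp [col]⟩, by
        rintro ⟨w1 | w1, w2⟩ hw <;> fin_cases w2 <;> simp_all [col, bg_adj]⟩

theorem tdStability_bookGraph (n : ℕ) (hn : 3 ≤ n) :
    tdStability ((completeBipartiteGraph (Fin 1) (Fin n)).boxProd
      (SimpleGraph.pathGraph 2)) = 1 := by
  have h4 : (4 : ℕ) ∈ {k | ∃ c : BV n → Fin k, IsTDColoring (BG n) c} := ⟨col n, col_td n⟩
  have hSne : {k | ∃ c : BV n → Fin k, IsTDColoring (BG n) c}.Nonempty := ⟨4, h4⟩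
  have hmem : ∃ c : BV n → Fin (tdChromatic (BG n)), IsTDColoring (BG n) c :=
    Nat.sInf_mem hSne
  have hle : tdChromatic (BG n) ≤ 4 := Nat.sInf_le h4
  have hne0 : 0 < tdChromatic (BG n) := by
    rcases Nat.eq_zero_or_pos (tdChromatic (BG n)) with h0 | h
    · exfalso
      obtain ⟨c, -⟩ := hmem
      rw [h0] at c
      exact (c (Sum.inl 0, 0)).elim0
    · exact h
  have hdiff : tdChromatic ((BG n).induce (delSet n)) ≠ tdChromatic (BG n) := by
    intro heq
    by_cases hT : {k | ∃ c : ↥(delSet n) → Fin k,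
        IsTDColoring ((BG n).induce (delSet n)) c}.Nonempty
    · have hmemT : ∃ c : ↥(delSet n) → Fin (tdChromatic ((BG n).induce (delSet n))),
          IsTDColoring ((BG n).induce (delSet n)) c := Nat.sInf_mem hT
      obtain ⟨c, hc⟩ := hmemT
      exact induced_lower n hn _ (heq ▸ hle) c hc
    · have h0 : tdChromatic ((BG n).induce (delSet n)) = 0 :=
        Nat.sInf_eq_zero.mpr (Or.inr (Set.not_nonempty_iff_eq_empty.mp hT))
      omega
  have hmem1 : (1 : ℕ) ∈ {k | ∃ S : Finset (BV n), S.card = k ∧ 0 < k ∧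
      tdChromatic ((BG n).induce {v | v ∉ S}) ≠ tdChromatic (BG n)} :=
    ⟨({(Sum.inl 0, 1)} : Finset (BV n)), Finset.card_singleton _, one_pos, hdiff⟩
  refine le_antisymm (Nat.sInf_le hmem1) (Nat.pos_of_ne_zero ?_)
  intro h0
  rw [show tdStability (completeBipartiteGraph (Fin 1) (Fin n) □ pathGraph 2) = sInf {k | ∃ S : Finset (BV n), S.card = k ∧ 0 < k ∧
      tdChromatic ((BG n).induce {v | v ∉ S}) ≠ tdChromatic (BG n)} from rfl, Nat.sInf_eq_zero] at h0
  rcases h0 with h0 | h0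
  · obtain ⟨S, -, hpos, -⟩ := h0
    exact absurd hpos (by omega)
  · rw [Set.eq_empty_iff_forall_notMem] at h0
    exact h0 1 hmem1
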